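/- If a quasi-m-ary function f : A^n → B (A finite, n ≥ 1) has at least one inessential variable, then f is essentially m-ary, i.e., ess f = m. -/
import Mathlib


/-- Variable `i` is essential in `f`. -/
def EssAt {A B : Type*} {n : ℕ} (f : (Fin n → A) → B) (i : Fin n) : Prop :=
  ∃ a b : Fin n → A, (∀ j, j ≠ i → a j = b j) ∧ f a ≠ f b

/-- The essential arity of `f`: the number of essential variables. -/
noncomputable def essArity {A B : Type*} {n : ℕ} (f : (Fin n → A) → B) : ℕ :=
  Set.ncard {i : Fin n | EssAt f i}

/-- `A^n_=`: tuples with at least two equal coordinates (all of `A` when `n = 1`). -/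
def Aneq (A : Type*) (n : ℕ) : Set (Fin n → A) :=
  {a | n = 1 ∨ ∃ i j : Fin n, i ≠ j ∧ a i = a j}

/-- Variable `i` is essential in the restriction of `f` to `S` (witnesses must lie in `S`). -/
def EssAtOn {A B : Type*} {n : ℕ} (f : (Fin n → A) → B) (S : Set (Fin n → A)) (i : Fin n) : Prop :=
  ∃ a b : Fin n → A, a ∈ S ∧ b ∈ S ∧ (∀ j, j ≠ i → a j = b j) ∧ f a ≠ f b

/-- Essential arity of the restriction of `f` to `S`. -/
noncomputable def essArityOn {A B : Type*} {n : ℕ} (f : (Fin n → A) → B)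
    (S : Set (Fin n → A)) : ℕ :=
  Set.ncard {i : Fin n | EssAtOn f S i}

/-- `g` is a support of `f`: they agree on `A^n_=`. -/
def IsSupport {A B : Type*} {n : ℕ} (f g : (Fin n → A) → B) : Prop :=
  ∀ a ∈ Aneq A n, g a = f a

/-- The quasi-arity of `f`: minimum essential arity of a support of `f`. -/
noncomputable def qarity {A B : Type*} {n : ℕ} (f : (Fin n → A) → B) : ℕ :=
  sInf {m | ∃ g : (Fin n → A) → B, IsSupport f g ∧ essArity g = m}

/-- The variable identification minor `f_{i ← j}`: substitute `x_j` for `x_i`. -/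
def idMinor {A B : Type*} {n : ℕ} (f : (Fin n → A) → B) (i j : Fin n) :
    (Fin n → A) → B :=
  fun a => f (Function.update a i (a j))

/-- The arity gap of `f`: minimum of `ess f - ess f_{i←j}` over pairs of distinct
essential variables. -/
noncomputable def arityGap {A B : Type*} {n : ℕ} (f : (Fin n → A) → B) : ℕ :=
  sInf {d | ∃ i j : Fin n, i ≠ j ∧ EssAt f i ∧ EssAt f j ∧
    d = essArity f - essArity (idMinor f i j)}

lemma key {A B : Type*} {n : ℕ} {f g : (Fin n → A) → B} (hs : IsSupport f g)
    {i : Fin n} (hi : ¬ EssAt f i) {j : Fin n} (hj : j ≠ i) (a : Fin n → A) :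
    g (Function.update a i (a j)) = f a := by
  have hi' : ∀ a b : Fin n → A, (∀ j, j ≠ i → a j = b j) → f a = f b := by
    intro a b h
    by_contra hne
    exact hi ⟨a, b, h, hne⟩
  have hmem : Function.update a i (a j) ∈ Aneq A n := by
    refine Or.inr ⟨i, j, fun h => hj h.symm, ?_⟩
    simp [Function.update_apply, hj]
  rw [hs _ hmem]
  apply hi'
  intro l hl
  simp [Function.update_apply, hl]

theorem stmt4 {A B : Type*} [Fintype A] {n m : ℕ} (hn : 0 < n)
    (f : (Fin n → A) → B) (hq : qarity f = m) (hi : ∃ i : Fin n, ¬ EssAt f i) :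
    essArity f = m := by
  obtain ⟨i, hi⟩ := hi
  have hmemf : essArity f ∈ {m | ∃ g : (Fin n → A) → B, IsSupport f g ∧ essArity g = m} :=
    ⟨f, fun a _ => rfl, rfl⟩
  have hle : m ≤ essArity f := hq ▸ Nat.sInf_le hmemf
  obtain ⟨g, hs, hg⟩ := Nat.sInf_mem ⟨_, hmemf⟩
  have hg : essArity g = m := by rw [hg]; exact hq
  -- goal: essArity f ≤ m = essArity g, then antisymm
  refine le_antisymm ?_ hle
  rw [← hg]
  rcases eq_or_ne n 1 with h1 | h1
  · -- g = f
    have : f = g := by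
      funext a
      exact (hs a (Or.inl h1)).symm
    rw [this]
  · have h2 : 2 ≤ n := by omega
    rcases eq_or_ne n 2 with h2' | h2'
    · -- n = 2 case
      by_cases he : {k : Fin n | EssAt f k}.Nonempty
      · obtain ⟨k, hk⟩ := he
        have hki : k ≠ i := fun h => hi (h ▸ hk)
        obtain ⟨a, b, hab, hfab⟩ := hk
        -- witnesses in g
        set a' := Function.update a i (a k) with ha'
        set b' := Function.update b i (b k) with hb'
        have hga : g a' = f a := key hs hi hki a
        have hgb : g b' = f b := key hs hi hki b
        set c := Function.update a' i (b k) with hc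
        have honly : ∀ l : Fin n, l ≠ k → l = i := by
          intro l hl
          subst h2'
          omega
        have hexg : ∃ l, EssAt g l := by
          by_cases hac : g a' = g c
          · refine ⟨k, c, b', ?_, ?_⟩
            · intro l hl
              have : l = i := honly l hl
              subst this
              simp [hc, hb']
            · rw [← hac, hga, hgb]; exact hfab
          · refine ⟨i, a', c, ?_, hac⟩
            intro l hl
            simp [hc, Function.update_apply, hl]
        obtain ⟨l, hl⟩ := hexg
        have h1le : {k : Fin n | EssAt f k} ⊆ {k} := by
          intro x hx
          have hxi : x ≠ i := fun h => hi (h ▸ hx)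
          by_contra hxk
          exact hxi (honly x hxk)
        calc essArity f ≤ Set.ncard ({k} : Set (Fin n)) :=
              Set.ncard_le_ncard h1le (Set.toFinite _)
          _ = 1 := Set.ncard_singleton k
          _ ≤ essArity g := (Set.ncard_pos (Set.toFinite _)).mpr ⟨l, hl⟩
      · have : {k : Fin n | EssAt f k} = ∅ := Set.not_nonempty_iff_eq_empty.mp he
        simp [essArity, this]
    · -- n ≥ 3
      have h3 : 3 ≤ n := by omega
      apply Set.ncard_le_ncard _ (Set.toFinite _)
      intro k hk
      have hki : k ≠ i := fun h => hi (h ▸ hk)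
      obtain ⟨a, b, hab, hfab⟩ := hk
      -- pick j ≠ i, j ≠ k
      have : ∃ j : Fin n, j ≠ i ∧ j ≠ k := by
        have hcard : 0 < (({i, k} : Finset (Fin n))ᶜ).card := by
          rw [Finset.card_compl]
          have h2c : ({i, k} : Finset (Fin n)).card ≤ 2 :=
            (Finset.card_insert_le _ _).trans (by simp)
          simp only [Fintype.card_fin]
          omega
        obtain ⟨j, hj⟩ := Finset.card_pos.mp hcard
        simp only [Finset.mem_compl, Finset.mem_insert, Finset.mem_singleton, not_or] at hj
        exact ⟨j, hj.1, hj.2⟩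
      obtain ⟨j, hji, hjk⟩ := this
      refine ⟨Function.update a i (a j), Function.update b i (b j), ?_, ?_⟩
      · intro l hl
        rcases eq_or_ne l i with rfl | hli
        · simp [hab j hjk]
        · simp [Function.update_apply, hli, hab l hl]
      · rw [key hs hi hji a, key hs hi hji b]
        exact hfab
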